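/- arXiv:1208.4995 — 2 statements merged into one kernel-verified Lean document; each statement's English description precedes it below -/
import Mathlib

section
/- For any finite simple graphs G and H, λ(G × H) ≤ ψ(G,H), where ψ(G,H) = ρ(G)·|E(H)| + 2·φ(H)·|E(G)|, ρ(G) = min{2·φ([A]) + |[A,B]| : {A,B} a partition of V(G) with A nonempty}, and φ denotes the bipartite edge frustration. -/
open SimpleGraph

/-- The direct (tensor) product of two simple graphs. -/
def tensorProd {α β : Type*} (G : SimpleGraph α) (H : SimpleGraph β) :
    SimpleGraph (α × β) where
  Adj p q := G.Adj p.1 q.1 ∧ H.Adj p.2 q.2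
  symm := ⟨fun _ _ h => ⟨h.1.symm, h.2.symm⟩⟩
  loopless := ⟨fun p h => G.loopless.irrefl p.1 h.1⟩

instance {α β : Type*} (G : SimpleGraph α) (H : SimpleGraph β)
    [DecidableRel G.Adj] [DecidableRel H.Adj] :
    DecidableRel (tensorProd G H).Adj :=
  fun p q => inferInstanceAs (Decidable (G.Adj p.1 q.1 ∧ H.Adj p.2 q.2))

/-- The edge connectivity of a graph: the least size of a set of edges whose
deletion disconnects the graph. -/
noncomputable def edgeConn {V : Type*} (G : SimpleGraph V) : ℕ :=
  sInf {n | ∃ S ⊆ G.edgeSet, ¬ (G.deleteEdges S).Connected ∧ S.ncard = n}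

/-- The bipartite edge frustration: the least number of edges whose deletion
makes the graph bipartite. -/
noncomputable def frustration {V : Type*} (G : SimpleGraph V) : ℕ :=
  sInf {n | ∃ S ⊆ G.edgeSet, ((G.deleteEdges S).Colorable 2) ∧ S.ncard = n}

/-- ρ(G) = min over partitions {A, Aᶜ} of V(G) with A nonempty of
2·φ(G[A]) + |[A, Aᶜ]|. -/
noncomputable def rho {V : Type*} (G : SimpleGraph V) : ℕ :=
  sInf {n | ∃ A : Set V, A.Nonempty ∧
    n = 2 * frustration (G.induce A) +
      {e ∈ G.edgeSet | ∃ a ∈ A, ∃ b ∉ A, e = s(a, b)}.ncard}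

/-- ψ(G,H) = ρ(G)·|E(H)| + 2·φ(H)·|E(G)|. -/
noncomputable def psi {α β : Type*} (G : SimpleGraph α) (H : SimpleGraph β) : ℕ :=
  rho G * H.edgeSet.ncard + 2 * frustration H * G.edgeSet.ncard

section AuxLemmas

variable {V : Type*}

lemma aux_edgeConn_le {G : SimpleGraph V} {S : Set (Sym2 V)} (hS : S ⊆ G.edgeSet)
    (hd : ¬ (G.deleteEdges S).Connected) : edgeConn G ≤ S.ncard :=
  Nat.sInf_le ⟨S, hS, hd, rfl⟩

lemma aux_walk_closed {G : SimpleGraph V} {T : Set V}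
    (h : ∀ x y, G.Adj x y → x ∈ T → y ∈ T) {u v : V} (p : G.Walk u v) (hu : u ∈ T) : v ∈ T := by
  induction p with
  | nil => exact hu
  | cons hadj _ ih => exact ih (h _ _ hadj hu)

lemma aux_not_connected {G : SimpleGraph V} {T : Set V}
    (hT : T.Nonempty) (hTc : Tᶜ.Nonempty)
    (h : ∀ x y, G.Adj x y → x ∈ T → y ∈ T) : ¬ G.Connected := by
  obtain ⟨u, hu⟩ := hT
  obtain ⟨v, hv⟩ := hTc
  intro hc
  obtain ⟨p⟩ := hc.preconnected u v
  exact hv (aux_walk_closed h p hu)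

lemma aux_frus_exists (G : SimpleGraph V) :
    ∃ F ⊆ G.edgeSet, ((G.deleteEdges F).Colorable 2) ∧ F.ncard = frustration G := by
  have hmem : frustration G ∈
      {n | ∃ S ⊆ G.edgeSet, ((G.deleteEdges S).Colorable 2) ∧ S.ncard = n} := by
    apply Nat.sInf_mem
    refine ⟨G.edgeSet.ncard, G.edgeSet, subset_rfl, ?_, rfl⟩
    refine ⟨Coloring.mk (fun _ => 0) ?_⟩
    intro v w hvw
    rw [deleteEdges_adj] at hvw
    exact absurd hvw.1 hvw.2
  exact hmem

lemma aux_fin2 : ∀ a b c : Fin 2, a ≠ c → b ≠ c → a = b := by decide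

lemma aux_fin2' : ∀ a b : Fin 2, a ≠ b → a + 1 = b := by decide

lemma aux_sym2_proj_cases {α β : Type*} (e : Sym2 (α × β)) (g g' : α) (h h' : β)
    (h1 : e.map Prod.fst = s(g, g')) (h2 : e.map Prod.snd = s(h, h')) :
    e = s((g, h), (g', h')) ∨ e = s((g, h'), (g', h)) := by
  induction e using Sym2.ind with
  | _ p q =>
    obtain ⟨p1, p2⟩ := p
    obtain ⟨q1, q2⟩ := q
    rw [Sym2.map_pair_eq, Sym2.eq_iff] at h1 h2
    simp only at h1 h2
    obtain ⟨rfl, rfl⟩ | ⟨rfl, rfl⟩ := h1 <;> obtain ⟨rfl, rfl⟩ | ⟨rfl, rfl⟩ := h2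
    · exact Or.inl rfl
    · exact Or.inr rfl
    · exact Or.inr Sym2.eq_swap
    · exact Or.inl Sym2.eq_swap

lemma aux_proj_mem {α β : Type*} {G : SimpleGraph α} {H : SimpleGraph β} {e : Sym2 (α × β)}
    (he : e ∈ (tensorProd G H).edgeSet) :
    e.map Prod.fst ∈ G.edgeSet ∧ e.map Prod.snd ∈ H.edgeSet := by
  induction e using Sym2.ind with
  | _ p q =>
    rw [Sym2.map_pair_eq, Sym2.map_pair_eq]
    exact ⟨(show G.Adj p.1 q.1 ∧ H.Adj p.2 q.2 from he).1, (show G.Adj p.1 q.1 ∧ H.Adj p.2 q.2 from he).2⟩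

lemma aux_count {α β : Type*} [Fintype α] [Fintype β] (G : SimpleGraph α) (H : SimpleGraph β)
    (K : Set (Sym2 α)) (L : Set (Sym2 β)) :
    {e ∈ (tensorProd G H).edgeSet | e.map Prod.fst ∈ K ∧ e.map Prod.snd ∈ L}.ncard
      ≤ 2 * (K.ncard * L.ncard) := by
  classical
  set P := {e ∈ (tensorProd G H).edgeSet | e.map Prod.fst ∈ K ∧ e.map Prod.snd ∈ L} with hP
  have hPfin : P.Finite := Set.toFinite _
  have hKfin : K.Finite := Set.toFinite _
  have hLfin : L.Finite := Set.toFinite _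
  set f : Sym2 (α × β) → Sym2 α × Sym2 β := fun e => (e.map Prod.fst, e.map Prod.snd) with hf
  set s := hPfin.toFinset with hs
  have hcard : s.card ≤ 2 * (s.image f).card := by
    apply Finset.card_le_mul_card_image
    rintro ⟨k, l⟩ _
    clear_value s
    induction k using Sym2.ind with
    | _ g g' =>
      induction l using Sym2.ind with
      | _ h h' =>
        refine le_trans (Finset.card_le_card (t := {s((g, h), (g', h')), s((g, h'), (g', h))}) ?_)
          (le_trans (Finset.card_insert_le _ _) (by simp))
        intro e he
        simp only [Finset.mem_filter] at he
        obtain ⟨-, hfe⟩ := he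
        have h1 : e.map Prod.fst = s(g, g') := congrArg Prod.fst hfe
        have h2 : e.map Prod.snd = s(h, h') := congrArg Prod.snd hfe
        have := aux_sym2_proj_cases e g g' h h' h1 h2
        simp only [Finset.mem_insert, Finset.mem_singleton]
        exact this
  have himg : (s.image f).card ≤ K.ncard * L.ncard := by
    have hsub : s.image f ⊆ hKfin.toFinset ×ˢ hLfin.toFinset := by
      intro b hb
      obtain ⟨e, he, rfl⟩ := Finset.mem_image.1 hb
      rw [hs, Set.Finite.mem_toFinset] at he
      rw [Finset.mem_product, Set.Finite.mem_toFinset, Set.Finite.mem_toFinset]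
      exact ⟨he.2.1, he.2.2⟩
    calc (s.image f).card ≤ (hKfin.toFinset ×ˢ hLfin.toFinset).card := Finset.card_le_card hsub
      _ = K.ncard * L.ncard := by
          rw [Finset.card_product, Set.ncard_eq_toFinset_card _ hKfin,
            Set.ncard_eq_toFinset_card _ hLfin]
  calc P.ncard = s.card := Set.ncard_eq_toFinset_card _ hPfin
    _ ≤ 2 * (s.image f).card := hcard
    _ ≤ 2 * (K.ncard * L.ncard) := by omega

lemma aux_ncard_prod {α β : Type*} (s : Set α) (t : Set β) :
    (s ×ˢ t).ncard = s.ncard * t.ncard := by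
  rw [← Nat.card_coe_set_eq, ← Nat.card_coe_set_eq, ← Nat.card_coe_set_eq,
    Nat.card_congr (Equiv.Set.prod s t), Nat.card_prod]

lemma aux_key {α β : Type*} [Fintype α] [Fintype β] (G : SimpleGraph α) (H : SimpleGraph β)
    (A : Set α) (FA : Set (Sym2 ↥A)) (FH : Set (Sym2 β))
    (cA : ↥A → Fin 2) (cH : β → Fin 2)
    (hcA : ∀ x y, ((G.induce A).deleteEdges FA).Adj x y → cA x ≠ cA y)
    (hcH : ∀ x y, (H.deleteEdges FH).Adj x y → cH x ≠ cH y)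
    (hT : {p : α × β | ∃ h : p.1 ∈ A, cA ⟨p.1, h⟩ = cH p.2}.Nonempty)
    (hTc : {p : α × β | ∃ h : p.1 ∈ A, cA ⟨p.1, h⟩ = cH p.2}ᶜ.Nonempty) :
    edgeConn (tensorProd G H) ≤
      (2 * FA.ncard + {e ∈ G.edgeSet | ∃ a ∈ A, ∃ b ∉ A, e = s(a, b)}.ncard) * H.edgeSet.ncard
        + 2 * FH.ncard * G.edgeSet.ncard := by
  classical
  set T := {p : α × β | ∃ h : p.1 ∈ A, cA ⟨p.1, h⟩ = cH p.2} with hTdef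
  set S := {e ∈ (tensorProd G H).edgeSet | ∃ p ∈ T, ∃ q ∉ T, e = s(p, q)} with hSdef
  have hSsub : S ⊆ (tensorProd G H).edgeSet := fun e he => he.1
  have hclose : ∀ x y, ((tensorProd G H).deleteEdges S).Adj x y → x ∈ T → y ∈ T := by
    intro x y hxy hx
    by_contra hy
    rw [deleteEdges_adj] at hxy
    exact hxy.2 ⟨hxy.1, x, hx, y, hy, rfl⟩
  have hdisc : ¬ ((tensorProd G H).deleteEdges S).Connected :=
    aux_not_connected hT hTc hclose
  refine le_trans (aux_edgeConn_le hSsub hdisc) ?_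
  set KA : Set (Sym2 α) := Sym2.map (Subtype.val) '' FA with hKA
  set crossK : Set (Sym2 α) := {e ∈ G.edgeSet | ∃ a ∈ A, ∃ b ∉ A, e = s(a, b)} with hcrossK
  set P1 := {e ∈ (tensorProd G H).edgeSet | e.map Prod.fst ∈ KA ∧ e.map Prod.snd ∈ H.edgeSet}
    with hP1
  set P2 := {e ∈ (tensorProd G H).edgeSet | e.map Prod.fst ∈ G.edgeSet ∧ e.map Prod.snd ∈ FH}
    with hP2
  set SC : Set (Sym2 (α × β)) := {e | ∃ g h g' h', g' ∉ A ∧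
      (∃ hg : g ∈ A, cA ⟨g, hg⟩ = cH h) ∧ G.Adj g g' ∧ H.Adj h h' ∧ s(h, h') ∉ FH ∧
      e = s((g, h), (g', h'))} with hSC
  have hsplit : S ⊆ P1 ∪ (SC ∪ P2) := by
    rintro e ⟨he1, p, hp, q, hq, rfl⟩
    have hadj : (tensorProd G H).Adj p q := he1
    have hGadj : G.Adj p.1 q.1 := (show G.Adj p.1 q.1 ∧ H.Adj p.2 q.2 from hadj).1
    have hHadj : H.Adj p.2 q.2 := (show G.Adj p.1 q.1 ∧ H.Adj p.2 q.2 from hadj).2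
    obtain ⟨hpa, hpc⟩ := hp
    by_cases hFHmem : s(p.2, q.2) ∈ FH
    · refine Or.inr (Or.inr ⟨he1, ?_, ?_⟩)
      · rw [Sym2.map_pair_eq]; exact hGadj
      · rw [Sym2.map_pair_eq]; exact hFHmem
    · have hcHne : cH p.2 ≠ cH q.2 := hcH _ _ (by rw [deleteEdges_adj]; exact ⟨hHadj, hFHmem⟩)
      by_cases hqA : q.1 ∈ A
      · have hne : cA ⟨q.1, hqA⟩ ≠ cH q.2 := fun hcontra => hq ⟨hqA, hcontra⟩
        have heq : cA ⟨q.1, hqA⟩ = cA ⟨p.1, hpa⟩ :=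
          aux_fin2 _ _ _ hne (hpc ▸ hcHne)
        have hFAmem : s((⟨p.1, hpa⟩ : A), (⟨q.1, hqA⟩ : A)) ∈ FA := by
          by_contra hno
          have hadj' : ((G.induce A).deleteEdges FA).Adj ⟨p.1, hpa⟩ ⟨q.1, hqA⟩ := by
            rw [deleteEdges_adj]
            exact ⟨hGadj, hno⟩
          exact hcA _ _ hadj' heq.symm
        refine Or.inl ⟨he1, ?_, ?_⟩
        · exact ⟨s((⟨p.1, hpa⟩ : A), (⟨q.1, hqA⟩ : A)), hFAmem, by simp [Sym2.map_pair_eq]⟩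
        · rw [Sym2.map_pair_eq]
          exact hHadj
      · exact Or.inr (Or.inl ⟨p.1, p.2, q.1, q.2, hqA, ⟨hpa, hpc⟩, hGadj, hHadj, hFHmem, rfl⟩)
  have hSCcount : SC.ncard ≤ crossK.ncard * H.edgeSet.ncard := by
    set f : Sym2 (α × β) → Sym2 α × Sym2 β := fun e => (e.map Prod.fst, e.map Prod.snd) with hf
    have hinj : Set.InjOn f SC := by
      rintro e1 ⟨g1, h1, g1', h1', hg1', ⟨hg1, hc1⟩, hGa1, hHa1, hFH1, rfl⟩
        e2 ⟨g2, h2, g2', h2', hg2', ⟨hg2, hc2⟩, hGa2, hHa2, hFH2, rfl⟩ hfe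
      have hfst : s(g1, g1') = s(g2, g2') := by
        have := congrArg Prod.fst hfe
        simpa [hf, Sym2.map_pair_eq] using this
      have hsnd : s(h1, h1') = s(h2, h2') := by
        have := congrArg Prod.snd hfe
        simpa [hf, Sym2.map_pair_eq] using this
      rw [Sym2.eq_iff] at hfst hsnd
      obtain ⟨rfl, rfl⟩ | ⟨rfl, rfl⟩ := hfst
      · obtain ⟨rfl, rfl⟩ | ⟨rfl, rfl⟩ := hsnd
        · rfl
        · exfalso
          have : cH h1 = cH h1' := by
            rw [← hc1, ← hc2]
          exact hcH _ _ (by rw [deleteEdges_adj]; exact ⟨hHa1, hFH1⟩) this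
      · exact absurd hg1 hg2'
    have himg : f '' SC ⊆ crossK ×ˢ H.edgeSet := by
      rintro b ⟨e, ⟨g, h, g', h', hg', ⟨hg, hc⟩, hGa, hHa, hFHm, rfl⟩, rfl⟩
      rw [Set.mem_prod]
      constructor
      · simp only [hf, Sym2.map_pair_eq]
        exact ⟨hGa, g, hg, g', hg', rfl⟩
      · simp only [hf, Sym2.map_pair_eq]
        exact hHa
    calc SC.ncard = (f '' SC).ncard := (Set.ncard_image_of_injOn hinj).symm
      _ ≤ (crossK ×ˢ H.edgeSet).ncard := Set.ncard_le_ncard himg (Set.toFinite _)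
      _ = crossK.ncard * H.edgeSet.ncard := aux_ncard_prod _ _
  have hKAcard : KA.ncard = FA.ncard :=
    Set.ncard_image_of_injOn (fun x _ y _ hxy => Sym2.map.injective Subtype.val_injective hxy)
  calc S.ncard ≤ (P1 ∪ (SC ∪ P2)).ncard := Set.ncard_le_ncard hsplit (Set.toFinite _)
    _ ≤ P1.ncard + (SC.ncard + P2.ncard) :=
        le_trans (Set.ncard_union_le _ _) (by gcongr; exact Set.ncard_union_le _ _)
    _ ≤ 2 * (KA.ncard * H.edgeSet.ncard) + (crossK.ncard * H.edgeSet.ncard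
          + 2 * (G.edgeSet.ncard * FH.ncard)) := by
        gcongr
        · exact aux_count G H KA H.edgeSet
        · exact aux_count G H G.edgeSet FH
    _ = (2 * FA.ncard + crossK.ncard) * H.edgeSet.ncard + 2 * FH.ncard * G.edgeSet.ncard := by
        rw [hKAcard]; ring

end AuxLemmas

theorem edgeConn_tensor_le_psi {α β : Type*} [Fintype α] [Fintype β]
    (G : SimpleGraph α) (H : SimpleGraph β) :
    edgeConn (tensorProd G H) ≤ psi G H := by
  classical
  rcases subsingleton_or_nontrivial (α × β) with hsub | hnt
  · rcases isEmpty_or_nonempty (α × β) with he | hne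
    · have h0 : edgeConn (tensorProd G H) ≤ (∅ : Set (Sym2 (α × β))).ncard :=
        aux_edgeConn_le (Set.empty_subset _) (fun hc => he.false hc.nonempty.some)
      exact le_trans h0 (by simp)
    · have hempty : {n | ∃ S ⊆ (tensorProd G H).edgeSet,
          ¬ ((tensorProd G H).deleteEdges S).Connected ∧ S.ncard = n} = ∅ := by
        apply Set.eq_empty_iff_forall_notMem.2
        rintro n ⟨S, _, hd, _⟩
        haveI := hne
        apply hd
        constructor
        intro u v
        rw [Subsingleton.elim u v]
      rw [edgeConn, hempty, Nat.sInf_empty]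
      exact Nat.zero_le _
  · have hne : Nonempty (α × β) := inferInstance
    have hα : Nonempty α := ⟨(Classical.arbitrary (α × β)).1⟩
    have hβ : Nonempty β := ⟨(Classical.arbitrary (α × β)).2⟩
    have hrhomem : rho G ∈ {n | ∃ A : Set α, A.Nonempty ∧
        n = 2 * frustration (G.induce A) +
          {e ∈ G.edgeSet | ∃ a ∈ A, ∃ b ∉ A, e = s(a, b)}.ncard} :=
      Nat.sInf_mem ⟨_, Set.univ, Set.univ_nonempty, rfl⟩
    obtain ⟨A, hA, hrho⟩ := hrhomem
    obtain ⟨FA, hFAsub, hFAcol, hFAcard⟩ := aux_frus_exists (G.induce A)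
    obtain ⟨FH, hFHsub, hFHcol, hFHcard⟩ := aux_frus_exists H
    obtain ⟨cA0⟩ := hFAcol
    obtain ⟨cH0⟩ := hFHcol
    set fA : ↥A → Fin 2 := ⇑cA0 with hfA
    set fH : β → Fin 2 := ⇑cH0 with hfH
    have hvalidA : ∀ x y, ((G.induce A).deleteEdges FA).Adj x y → fA x ≠ fA y :=
      fun x y hadj => cA0.valid hadj
    have hvalidH : ∀ x y, (H.deleteEdges FH).Adj x y → fH x ≠ fH y :=
      fun x y hadj => cH0.valid hadj
    have hgoal : psi G H = (2 * FA.ncard +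
        {e ∈ G.edgeSet | ∃ a ∈ A, ∃ b ∉ A, e = s(a, b)}.ncard) * H.edgeSet.ncard
          + 2 * FH.ncard * G.edgeSet.ncard := by
      rw [psi, hrho, hFAcard, hFHcard]
    rw [hgoal]
    set T1 := {p : α × β | ∃ h : p.1 ∈ A, fA ⟨p.1, h⟩ = fH p.2} with hT1
    by_cases h1 : T1.Nonempty ∧ T1ᶜ.Nonempty
    · exact aux_key G H A FA FH fA fH hvalidA hvalidH h1.1 h1.2
    · set fA' : ↥A → Fin 2 := fun x => fA x + 1 with hfA'
      have hvalidA' : ∀ x y, ((G.induce A).deleteEdges FA).Adj x y → fA' x ≠ fA' y :=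
        fun x y hadj h => hvalidA x y hadj (by
          have := congrArg (· + 1) h
          simpa [hfA'] using add_right_cancel h)
      set T2 := {p : α × β | ∃ h : p.1 ∈ A, fA' ⟨p.1, h⟩ = fH p.2} with hT2
      by_cases h2 : T2.Nonempty ∧ T2ᶜ.Nonempty
      · exact aux_key G H A FA FH fA' fH hvalidA' hvalidH h2.1 h2.2
      · -- degenerate case: one of T1, T2 is the whole vertex set
        obtain ⟨a0, ha0⟩ := hA
        obtain ⟨b0⟩ := hβ
        have hmem : (a0, b0) ∈ T1 ∨ (a0, b0) ∈ T2 := by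
          by_cases hc : fA ⟨a0, ha0⟩ = fH b0
          · exact Or.inl ⟨ha0, hc⟩
          · exact Or.inr ⟨ha0, aux_fin2' _ _ hc⟩
        have hUniv : (∀ p : α × β, p ∈ T1) ∨ (∀ p : α × β, p ∈ T2) := by
          rcases hmem with hm | hm
          · left
            intro p
            by_contra hp
            exact h1 ⟨⟨_, hm⟩, ⟨p, hp⟩⟩
          · right
            intro p
            by_contra hp
            exact h2 ⟨⟨_, hm⟩, ⟨p, hp⟩⟩
        obtain ⟨c, hc⟩ : ∃ c : ↥A → Fin 2, ∀ p : α × β, ∃ hp : p.1 ∈ A, c ⟨p.1, hp⟩ = fH p.2 :=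
          hUniv.elim (fun h => ⟨fA, h⟩) (fun h => ⟨fA', h⟩)
        have hconst : ∀ h h' : β, fH h = fH h' := by
          intro h h'
          obtain ⟨ha, hch⟩ := hc (a0, h)
          obtain ⟨ha', hch'⟩ := hc (a0, h')
          rw [← hch, ← hch']
        have hFHall : FH = H.edgeSet := by
          refine Set.Subset.antisymm hFHsub ?_
          intro e he
          induction e using Sym2.ind with
          | _ x y =>
            by_contra hno
            exact hvalidH x y (by rw [deleteEdges_adj]; exact ⟨he, hno⟩) (hconst x y)
        obtain ⟨u, v, huv⟩ := exists_pair_ne (α × β)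
        have hdisc : ¬ ((tensorProd G H).deleteEdges (tensorProd G H).edgeSet).Connected := by
          refine aux_not_connected (T := {u}) ⟨u, rfl⟩ ⟨v, fun hv => huv (by
            simpa using hv.symm)⟩ ?_
          intro x y hxy _
          rw [deleteEdges_adj] at hxy
          exact absurd hxy.1 hxy.2
        have hle := aux_edgeConn_le subset_rfl hdisc
        have hcount : (tensorProd G H).edgeSet.ncard
            ≤ 2 * (G.edgeSet.ncard * H.edgeSet.ncard) := by
          have hkl := aux_count G H G.edgeSet H.edgeSet
          have hEq : {e ∈ (tensorProd G H).edgeSet |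
              e.map Prod.fst ∈ G.edgeSet ∧ e.map Prod.snd ∈ H.edgeSet}
                = (tensorProd G H).edgeSet := by
            refine Set.Subset.antisymm (fun e he => he.1) (fun e he => ⟨he, aux_proj_mem he⟩)
          rwa [hEq] at hkl
        rw [hFHall]
        calc edgeConn (tensorProd G H) ≤ (tensorProd G H).edgeSet.ncard := hle
          _ ≤ 2 * (G.edgeSet.ncard * H.edgeSet.ncard) := hcount
          _ ≤ (2 * FA.ncard + {e ∈ G.edgeSet | ∃ a ∈ A, ∃ b ∉ A, e = s(a, b)}.ncard)
                * H.edgeSet.ncard + 2 * H.edgeSet.ncard * G.edgeSet.ncard := by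
              have : 2 * (G.edgeSet.ncard * H.edgeSet.ncard)
                  = 2 * H.edgeSet.ncard * G.edgeSet.ncard := by ring
              rw [this]
              exact Nat.le_add_left _ _
end

section
/- Let G and H be finite simple connected graphs and suppose that for a minimum edge-cut S of G × H with components B and W, every set N_G(x) × {y} lies entirely in B or entirely in W. If for some y ∈ V(H) there exist adjacent vertices x1, x2 of G with (x1,y) and (x2,y) both in B, then the entire G-layer G_y = V(G) × {y} is contained in B. -/
open SimpleGraph

theorem layer_monochromatic {α β : Type*} [Fintype α] [Fintype β]
    (G : SimpleGraph α) (H : SimpleGraph β)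
    (hG : G.Connected) (hH : H.Connected)
    (S : Set (Sym2 (α × β))) (hSsub : S ⊆ (tensorProd G H).edgeSet)
    (hSdisc : ¬ ((tensorProd G H).deleteEdges S).Connected)
    (hSmin : S.ncard = edgeConn (tensorProd G H))
    (B W : Set (α × β)) (hBne : B.Nonempty) (hWne : W.Nonempty)
    (hunion : B ∪ W = Set.univ) (hdisj : Disjoint B W)
    (hcomp : ∀ p q : α × β, ((tensorProd G H).deleteEdges S).Reachable p q ↔
      ((p ∈ B ∧ q ∈ B) ∨ (p ∈ W ∧ q ∈ W)))
    (hmono : ∀ (x : α) (y : β),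
      ({p : α × β | p.1 ∈ G.neighborSet x ∧ p.2 = y} ⊆ B) ∨
      ({p : α × β | p.1 ∈ G.neighborSet x ∧ p.2 = y} ⊆ W))
    (y : β) (x1 x2 : α) (hadj : G.Adj x1 x2)
    (h1 : (x1, y) ∈ B) (h2 : (x2, y) ∈ B) :
    ∀ g : α, (g, y) ∈ B := by
  have subB : ∀ g : α, (∃ a, G.Adj g a ∧ (a, y) ∈ B) →
      {p : α × β | p.1 ∈ G.neighborSet g ∧ p.2 = y} ⊆ B := by
    intro g ⟨a, hga, haB⟩
    rcases hmono g y with h | h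
    · exact h
    · exact absurd (hdisj.ne_of_mem haB (h ⟨(G.mem_neighborSet g a).mpr hga, rfl⟩)) (fun c => c rfl)
  set Q : α → Prop := fun g => (g, y) ∈ B ∧ ∃ a, G.Adj g a ∧ (a, y) ∈ B with hQ
  have step : ∀ {u v : α}, G.Walk u v → Q u → Q v := by
    intro u v w
    induction w with
    | nil => exact id
    | cons h p ih =>
      intro hu
      refine ih ⟨subB _ hu.2 ⟨(G.mem_neighborSet _ _).mpr h, rfl⟩, _, h.symm, hu.1⟩
  intro g
  exact (step ((hG.preconnected x1 g).some) ⟨h1, x2, hadj, h2⟩).1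
end
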